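/- Fix σ ∈ {−1,1}, y ∈ {−1,1}^m, C > 0, and elementwise bounds Q^L_{ij} ≤ Q^U_{ij} for all i ∈ {1,…,m} ∪ {t} and j ∈ {1,…,m}, where t is a distinguished test index. Call a tuple (α, u, v, s, τ, Z), with α, u, v ∈ ℝ^m, s, τ ∈ {0,1}^m, and Z ∈ ℝ^{({1,…,m}∪{t})×m}, MILP-feasible if: Z_{ij} ≤ α_j Q^U_{ij} and Z_{ij} ≥ α_j Q^L_{ij} for all i ∈ {1,…,m} ∪ {t} and j ∈ {1,…,m}; and for all i ∈ {1,…,m}: ∑_{j=1}^m y_i y_j Z_{ij} − 1 − u_i + v_i = 0, 0 ≤ α_i ≤ C, u_i ≥ 0, v_i ≥ 0, u_i ≤ M_{u_i} s_i, α_i ≤ C(1 − s_i), v_i ≤ M_{v_i} τ_i, and C − α_i ≤ C(1 − τ_i), where M_{u_i} = UB_i − 1 and M_{v_i} = 1 − LB_i with UB_i = ∑_{j : y_i y_j = 1} C·max(Q^U_{ij}, 0) − ∑_{j : y_i y_j = −1} C·min(Q^L_{ij}, 0) and LB_i = ∑_{j : y_i y_j = 1} C·min(Q^L_{ij}, 0)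 − ∑_{j : y_i y_j = −1} C·max(Q^U_{ij}, 0). Suppose every MILP-feasible tuple satisfies σ·∑_{i=1}^m y_i Z_{ti} > 0. Then for every matrix Q̃ indexed by ({1,…,m}∪{t})×{1,…,m} with Q^L_{ij} ≤ Q̃_{ij} ≤ Q^U_{ij} for all such i, j, and every (α, u, v) satisfying the KKT system for the training block of Q̃ (i.e., 0 ≤ α_i ≤ C, u_i ≥ 0, v_i ≥ 0, ∑_{j=1}^m y_i y_j α_j Q̃_{ij} − 1 − u_i + v_i = 0, u_i α_i = 0, v_i (C − α_i) = 0 for all i ∈ {1,…,m}), it holds that σ·∑_{i=1}^m y_i α_i Q̃_{ti} > 0. -/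

import Mathlib

open Finset

private lemma aux_le (C a Q QU : ℝ) (h0 : 0 ≤ a) (haC : a ≤ C) (hU : Q ≤ QU) :
    a * Q ≤ C * max QU 0 := by
  rcases le_total Q 0 with h | h
  · have h1 : a * Q ≤ 0 := mul_nonpos_of_nonneg_of_nonpos h0 h
    exact h1.trans (mul_nonneg (h0.trans haC) (le_max_right _ _))
  · calc a * Q ≤ C * Q := by nlinarith
    _ ≤ C * max QU 0 := by
        exact mul_le_mul_of_nonneg_left (hU.trans (le_max_left _ _)) (h0.trans haC)

private lemma aux_ge (C a Q QL : ℝ) (h0 : 0 ≤ a) (haC : a ≤ C) (hL : QL ≤ Q) :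
    C * min QL 0 ≤ a * Q := by
  rcases le_total 0 Q with h | h
  · have h1 : C * min QL 0 ≤ 0 :=
      mul_nonpos_of_nonneg_of_nonpos (h0.trans haC) (min_le_right _ _)
    exact h1.trans (mul_nonneg h0 h)
  · calc C * min QL 0 ≤ C * Q :=
        mul_le_mul_of_nonneg_left ((min_le_left _ _).trans hL) (h0.trans haC)
      _ ≤ a * Q := by nlinarith

/-- **Soundness of the MILP certificate (Theorem 1, QPCert).**
Indices `{1,…,m} ∪ {t}` are modeled by `Option (Fin m)`, with `none` playing the
role of the test index `t`. If every MILP-feasible tuple `(α, u, v, s, τ, Z)` has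
objective `σ·∑ᵢ yᵢ Z_{t i} > 0`, then for every kernel matrix `Q̃` within the
elementwise bounds and every KKT point `(α, u, v)` of its training block, the
prediction margin satisfies `σ·∑ᵢ yᵢ αᵢ Q̃_{t i} > 0`. -/
theorem milp_certificate_sound {m : ℕ} (σ : ℝ) (hσ : σ = 1 ∨ σ = -1)
    (y : Fin m → ℝ) (hy : ∀ i, y i = 1 ∨ y i = -1)
    (C : ℝ) (hC : 0 < C)
    (QL QU : Option (Fin m) → Fin m → ℝ)
    (hLU : ∀ i j, QL i j ≤ QU i j)
    (hmilp : ∀ (α u v s τ : Fin m → ℝ) (Z : Option (Fin m) → Fin m → ℝ),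
      (∀ i, s i = 0 ∨ s i = 1) →
      (∀ i, τ i = 0 ∨ τ i = 1) →
      (∀ (i : Option (Fin m)) (j : Fin m),
        Z i j ≤ α j * QU i j ∧ α j * QL i j ≤ Z i j) →
      (∀ i : Fin m,
        (∑ j, y i * y j * Z (some i) j) - 1 - u i + v i = 0 ∧
        0 ≤ α i ∧ α i ≤ C ∧ 0 ≤ u i ∧ 0 ≤ v i ∧
        u i ≤ (((∑ j ∈ univ.filter (fun j => y i * y j = 1),
                    C * max (QU (some i) j) 0)
                - ∑ j ∈ univ.filter (fun j => y i * y j = -1),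
                    C * min (QL (some i) j) 0) - 1) * s i ∧
        α i ≤ C * (1 - s i) ∧
        v i ≤ (1 - ((∑ j ∈ univ.filter (fun j => y i * y j = 1),
                    C * min (QL (some i) j) 0)
                - ∑ j ∈ univ.filter (fun j => y i * y j = -1),
                    C * max (QU (some i) j) 0)) * τ i ∧
        C - α i ≤ C * (1 - τ i)) →
      0 < σ * ∑ i, y i * Z none i) :
    ∀ (Qt : Option (Fin m) → Fin m → ℝ),
      (∀ i j, QL i j ≤ Qt i j ∧ Qt i j ≤ QU i j) →
      ∀ α u v : Fin m → ℝ,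
        (∀ i : Fin m, 0 ≤ α i ∧ α i ≤ C ∧ 0 ≤ u i ∧ 0 ≤ v i ∧
          (∑ j, y i * y j * α j * Qt (some i) j) - 1 - u i + v i = 0 ∧
          u i * α i = 0 ∧ v i * (C - α i) = 0) →
        0 < σ * ∑ i, y i * α i * Qt none i := by
  intro Qt hQ α u v hkkt
  have hyy : ∀ i j : Fin m, y i * y j = 1 ∨ y i * y j = -1 := by
    intro i j
    rcases hy i with h | h <;> rcases hy j with h' | h' <;> rw [h, h'] <;> norm_num
  have hfe : ∀ i : Fin m,
      univ.filter (fun j => ¬ (y i * y j = 1)) = univ.filter (fun j => y i * y j = -1) := by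
    intro i
    apply Finset.filter_congr
    intro j _
    rcases hyy i j with h | h <;> rw [h] <;> norm_num
  -- Upper and lower bounds on the stationarity sum
  have hsplit : ∀ i : Fin m,
      (∑ j, y i * y j * α j * Qt (some i) j)
        = (∑ j ∈ univ.filter (fun j => y i * y j = 1), y i * y j * α j * Qt (some i) j)
          + ∑ j ∈ univ.filter (fun j => y i * y j = -1), y i * y j * α j * Qt (some i) j := by
    intro i
    rw [← hfe i]
    exact (Finset.sum_filter_add_sum_filter_not univ _ _).symm
  have hUB : ∀ i : Fin m,
      (∑ j, y i * y j * α j * Qt (some i) j)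
        ≤ (∑ j ∈ univ.filter (fun j => y i * y j = 1), C * max (QU (some i) j) 0)
          - ∑ j ∈ univ.filter (fun j => y i * y j = -1), C * min (QL (some i) j) 0 := by
    intro i
    rw [hsplit i]
    have hA : (∑ j ∈ univ.filter (fun j => y i * y j = 1), y i * y j * α j * Qt (some i) j)
        ≤ ∑ j ∈ univ.filter (fun j => y i * y j = 1), C * max (QU (some i) j) 0 := by
      apply Finset.sum_le_sum
      intro j hj
      have h := (Finset.mem_filter.mp hj).2
      rw [h, one_mul]
      exact aux_le C (α j) _ _ (hkkt j).1 (hkkt j).2.1 (hQ (some i) j).2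
    have hB : (∑ j ∈ univ.filter (fun j => y i * y j = -1), y i * y j * α j * Qt (some i) j)
        ≤ ∑ j ∈ univ.filter (fun j => y i * y j = -1), -(C * min (QL (some i) j) 0) := by
      apply Finset.sum_le_sum
      intro j hj
      have h := (Finset.mem_filter.mp hj).2
      rw [h]
      have h2 := aux_ge C (α j) (Qt (some i) j) (QL (some i) j)
        (hkkt j).1 (hkkt j).2.1 (hQ (some i) j).1
      nlinarith
    have hB' : (∑ j ∈ univ.filter (fun j => y i * y j = -1), -(C * min (QL (some i) j) 0))
        = -∑ j ∈ univ.filter (fun j => y i * y j = -1), C * min (QL (some i) j) 0 := by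
      rw [Finset.sum_neg_distrib]
    linarith [hA, hB' ▸ hB]
  have hLB : ∀ i : Fin m,
      (∑ j ∈ univ.filter (fun j => y i * y j = 1), C * min (QL (some i) j) 0)
          - ∑ j ∈ univ.filter (fun j => y i * y j = -1), C * max (QU (some i) j) 0
        ≤ ∑ j, y i * y j * α j * Qt (some i) j := by
    intro i
    rw [hsplit i]
    have hA : (∑ j ∈ univ.filter (fun j => y i * y j = 1), C * min (QL (some i) j) 0)
        ≤ ∑ j ∈ univ.filter (fun j => y i * y j = 1), y i * y j * α j * Qt (some i) j := by
      apply Finset.sum_le_sum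
      intro j hj
      have h := (Finset.mem_filter.mp hj).2
      rw [h, one_mul]
      exact aux_ge C (α j) _ _ (hkkt j).1 (hkkt j).2.1 (hQ (some i) j).1
    have hB : (∑ j ∈ univ.filter (fun j => y i * y j = -1), -(C * max (QU (some i) j) 0))
        ≤ ∑ j ∈ univ.filter (fun j => y i * y j = -1), y i * y j * α j * Qt (some i) j := by
      apply Finset.sum_le_sum
      intro j hj
      have h := (Finset.mem_filter.mp hj).2
      rw [h]
      have h2 := aux_le C (α j) (Qt (some i) j) (QU (some i) j)
        (hkkt j).1 (hkkt j).2.1 (hQ (some i) j).2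
      nlinarith
    have hB' : (∑ j ∈ univ.filter (fun j => y i * y j = -1), -(C * max (QU (some i) j) 0))
        = -∑ j ∈ univ.filter (fun j => y i * y j = -1), C * max (QU (some i) j) 0 := by
      rw [Finset.sum_neg_distrib]
    linarith [hA, hB' ▸ hB]
  -- build the MILP-feasible point
  have h := hmilp α u v (fun i => if u i = 0 then 0 else 1) (fun i => if v i = 0 then 0 else 1)
      (fun i j => α j * Qt i j)
      (by intro i; split <;> simp)
      (by intro i; split <;> simp)
      (by
        intro i j
        constructor
        · exact mul_le_mul_of_nonneg_left (hQ i j).2 (hkkt j).1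
        · exact mul_le_mul_of_nonneg_left (hQ i j).1 (hkkt j).1)
      (by
        intro i
        obtain ⟨hα0, hαC, hu0, hv0, hst, hcu, hcv⟩ := hkkt i
        have hst' : (∑ j, y i * y j * (α j * Qt (some i) j)) - 1 - u i + v i = 0 := by
          have : (∑ j, y i * y j * (α j * Qt (some i) j))
              = ∑ j, y i * y j * α j * Qt (some i) j := by
            apply Finset.sum_congr rfl; intro j _; ring
          rw [this]; exact hst
        refine ⟨hst', hα0, hαC, hu0, hv0, ?_, ?_, ?_, ?_⟩
        · by_cases hui : u i = 0
          · simp [hui]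
          · simp only [if_neg hui, mul_one]
            have hαz : α i = 0 := by
              rcases mul_eq_zero.mp hcu with h' | h'
              · exact absurd h' hui
              · exact h'
            have hvz : v i = 0 := by
              rw [hαz, sub_zero] at hcv
              rcases mul_eq_zero.mp hcv with h' | h'
              · exact h'
              · exact absurd h' hC.ne'
            have := hUB i
            linarith
        · by_cases hui : u i = 0
          · simp only [if_pos hui, mul_zero, sub_zero, mul_one]; linarith
          · simp only [if_neg hui]
            have hαz : α i = 0 := by
              rcases mul_eq_zero.mp hcu with h' | h'
              · exact absurd h' hui
              · exact h'
            rw [hαz]; norm_num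
        · by_cases hvi : v i = 0
          · simp [hvi]
          · simp only [if_neg hvi, mul_one]
            have hαz : α i = C := by
              rcases mul_eq_zero.mp hcv with h' | h'
              · exact absurd h' hvi
              · linarith [sub_eq_zero.mp h']
            have huz : u i = 0 := by
              rw [hαz] at hcu
              rcases mul_eq_zero.mp hcu with h' | h'
              · exact h'
              · exact absurd h' hC.ne'
            have := hLB i
            linarith
        · by_cases hvi : v i = 0
          · simp only [if_pos hvi, mul_zero, sub_zero, mul_one]; linarith
          · simp only [if_neg hvi]
            have hαz : α i = C := by
              rcases mul_eq_zero.mp hcv with h' | h'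
              · exact absurd h' hvi
              · linarith [sub_eq_zero.mp h']
            rw [hαz]; norm_num)
  have hsum : (∑ i, y i * α i * Qt none i) = ∑ i, y i * (α i * Qt none i) := by
    apply Finset.sum_congr rfl; intro j _; ring
  rw [hsum]
  exact h
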